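/- Let A ⊆ R ⊆ S be commutative Noetherian rings, let ι : R → S denote the inclusion, and let β : S → R be any R-linear map. Then for every A-linear differential operator δ on S of order at most n (δ ∈ Dⁿ_{S|A}), the composite β∘δ∘ι : R → R is an A-linear differential operator on R of order at most n (β∘δ|_R ∈ Dⁿ_{R|A}). -/
import Mathlib


/-- `δ` is an `A`-linear differential operator on `R` of order at most `n`:
order-zero operators are multiplications by elements of `R`, and `δ` has order
at most `n+1` if all commutators `[δ, r] = δ∘(r·) − (r·)∘δ` have order at most `n`. -/
def IsDiffOpOfOrder (A : Type*) {R : Type*} [CommRing A] [CommRing R] [Algebra A R] :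
    ℕ → (R →ₗ[A] R) → Prop
  | 0 => fun δ => ∃ r : R, ∀ x, δ x = r * x
  | (n+1) => fun δ => ∀ r : R,
      IsDiffOpOfOrder A n (δ ∘ₗ LinearMap.mulLeft A r - LinearMap.mulLeft A r ∘ₗ δ)

/-- The restriction `β ∘ δ|_R : R → R` of an operator `δ : S → S` along the inclusion
`R ⊆ S` and an `R`-linear map `β : S → R`. -/
def restrictOp (A R S : Type*) [CommRing A] [CommRing R] [CommRing S]
    [Algebra A R] [Algebra A S] [Algebra R S] [IsScalarTower A R S]
    (β : S →ₗ[R] R) (δ : S →ₗ[A] S) : R →ₗ[A] R :=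
  (β.restrictScalars A) ∘ₗ δ ∘ₗ ((IsScalarTower.toAlgHom A R S).toLinearMap)

lemma restrictOp_comm (A R S : Type*) [CommRing A] [CommRing R] [CommRing S]
    [Algebra A R] [Algebra A S] [Algebra R S] [IsScalarTower A R S]
    (β : S →ₗ[R] R) (δ : S →ₗ[A] S) (r : R) :
    restrictOp A R S β δ ∘ₗ LinearMap.mulLeft A r - LinearMap.mulLeft A r ∘ₗ restrictOp A R S β δ
      = restrictOp A R S β
          (δ ∘ₗ LinearMap.mulLeft A (algebraMap R S r)
            - LinearMap.mulLeft A (algebraMap R S r) ∘ₗ δ) := by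
  ext x
  simp only [LinearMap.sub_apply, LinearMap.comp_apply, LinearMap.mulLeft_apply, restrictOp,
    LinearMap.coe_comp, Function.comp_apply, LinearMap.coe_restrictScalars,
    AlgHom.toLinearMap_apply, IsScalarTower.coe_toAlgHom', map_sub, map_mul]
  rw [← map_mul, ← Algebra.smul_def, map_smul, smul_eq_mul]

/-- Lemma `LemmaRestriction`.  Let `A ⊆ R ⊆ S` be commutative
Noetherian rings, `ι : R → S` the inclusion, and `β : S → R` any `R`-linear map.
Then for every `δ ∈ Dⁿ_{S|A}`, the composite `β∘δ∘ι : R → R` lies in `Dⁿ_{R|A}`. -/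
theorem restriction_of_diffOp_along_splitting
    (A R S : Type*) [CommRing A] [CommRing R] [CommRing S]
    [IsNoetherianRing A] [IsNoetherianRing R] [IsNoetherianRing S]
    [Algebra A R] [Algebra A S] [Algebra R S] [IsScalarTower A R S]
    (hAR : Function.Injective (algebraMap A R))
    (hRS : Function.Injective (algebraMap R S))
    (β : S →ₗ[R] R)
    (n : ℕ) (δ : S →ₗ[A] S) (hδ : IsDiffOpOfOrder A n δ) :
    IsDiffOpOfOrder A n (restrictOp A R S β δ) := by
  induction n generalizing δ with
  | zero =>
    obtain ⟨s, hs⟩ := hδ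
    refine ⟨β s, fun x => ?_⟩
    simp only [restrictOp, LinearMap.coe_comp, Function.comp_apply,
      LinearMap.coe_restrictScalars, AlgHom.toLinearMap_apply, IsScalarTower.coe_toAlgHom', hs]
    have : s * algebraMap R S x = x • s := by rw [Algebra.smul_def, mul_comm]
    rw [this, map_smul, smul_eq_mul, mul_comm]
  | succ n ih =>
    intro r
    rw [restrictOp_comm]
    exact ih _ (hδ (algebraMap R S r))
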